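/- Let s₁₂ be the real 4-dimensional Lie algebra with basis e₁, e₂, e₃, e₄ and nonzero brackets ⁅e₁, e₃⁆ = −e₁, ⁅e₁, e₄⁆ = e₂, ⁅e₂, e₃⁆ = −e₂, ⁅e₂, e₄⁆ = −e₁ (all other brackets of basis elements zero, extended bilinearly and antisymmetrically). A linear endomorphism D of s₁₂ is a derivation of s₁₂ if and only if there exist real numbers μ₁₁, μ₁₂, μ₁₃, μ₁₄ such that D e₁ = μ₁₁ e₁ − μ₁₂ e₂, D e₂ = μ₁₂ e₁ + μ₁₁ e₂, D e₃ = μ₁₃ e₁ + μ₁₄ e₂, and D e₄ = μ₁₄ e₁ − μ₁₃ e₂. -/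

import Mathlib

/-- Characterization of the derivations of the real 4-dimensional Lie algebra `s₁₂`
(Šnobl–Winternitz `s_{4,12}`), with basis `e₁ = b 0, …, e₄ = b 3` and nonzero brackets
`⁅e₁, e₃⁆ = -e₁`, `⁅e₁, e₄⁆ = e₂`, `⁅e₂, e₃⁆ = -e₂`, `⁅e₂, e₄⁆ = -e₁`. -/
theorem stmt_15 {L : Type*} [LieRing L] [LieAlgebra ℝ L]
    (b : Module.Basis (Fin 4) ℝ L)
    (h12 : ⁅b 0, b 1⁆ = 0) (h13 : ⁅b 0, b 2⁆ = -b 0) (h14 : ⁅b 0, b 3⁆ = b 1)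
    (h23 : ⁅b 1, b 2⁆ = -b 1) (h24 : ⁅b 1, b 3⁆ = -b 0) (h34 : ⁅b 2, b 3⁆ = 0)
    (D : L →ₗ[ℝ] L) :
    (∀ x y : L, D ⁅x, y⁆ = ⁅D x, y⁆ + ⁅x, D y⁆) ↔
      ∃ μ11 μ12 μ13 μ14 : ℝ,
        D (b 0) = μ11 • b 0 - μ12 • b 1 ∧
        D (b 1) = μ12 • b 0 + μ11 • b 1 ∧
        D (b 2) = μ13 • b 0 + μ14 • b 1 ∧
        D (b 3) = μ14 • b 0 - μ13 • b 1 := by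
  have h21 : ⁅b 1, b 0⁆ = 0 := by rw [← lie_skew, h12, neg_zero]
  have h31 : ⁅b 2, b 0⁆ = b 0 := by rw [← lie_skew, h13, neg_neg]
  have h41 : ⁅b 3, b 0⁆ = -b 1 := by rw [← lie_skew, h14]
  have h32 : ⁅b 2, b 1⁆ = b 1 := by rw [← lie_skew, h23, neg_neg]
  have h42 : ⁅b 3, b 1⁆ = b 0 := by rw [← lie_skew, h24, neg_neg]
  have h43 : ⁅b 3, b 2⁆ = 0 := by rw [← lie_skew, h34, neg_zero]
  constructor
  · intro h
    have hD0 := (b.sum_repr (D (b 0))).symm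
    have hD1 := (b.sum_repr (D (b 1))).symm
    have hD2 := (b.sum_repr (D (b 2))).symm
    have hD3 := (b.sum_repr (D (b 3))).symm
    rw [Fin.sum_univ_four] at hD0 hD1 hD2 hD3
    set a0 := b.repr (D (b 0)) 0; set a1 := b.repr (D (b 0)) 1
    set a2 := b.repr (D (b 0)) 2; set a3 := b.repr (D (b 0)) 3
    set B0 := b.repr (D (b 1)) 0; set B1 := b.repr (D (b 1)) 1
    set B2 := b.repr (D (b 1)) 2; set B3 := b.repr (D (b 1)) 3
    set c0 := b.repr (D (b 2)) 0; set c1 := b.repr (D (b 2)) 1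
    set c2 := b.repr (D (b 2)) 2; set c3 := b.repr (D (b 2)) 3
    set e0 := b.repr (D (b 3)) 0; set e1 := b.repr (D (b 3)) 1
    set e2 := b.repr (D (b 3)) 2; set e3 := b.repr (D (b 3)) 3
    have e02 := h (b 0) (b 2)
    have e12 := h (b 1) (b 2)
    have e03 := h (b 0) (b 3)
    have e13 := h (b 1) (b 3)
    have e23 := h (b 2) (b 3)
    rw [h13, map_neg, hD0, hD2] at e02
    rw [h23, map_neg, hD1, hD2] at e12
    rw [h14, hD0, hD3] at e03
    rw [hD1] at e03
    rw [h24, map_neg, hD1, hD3] at e13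
    rw [hD0] at e13
    rw [h34, map_zero, hD2, hD3] at e23
    simp only [add_lie, lie_add, smul_lie, lie_smul, h12, h13, h14, h23, h24, h34,
      h21, h31, h41, h32, h42, h43, lie_self, smul_zero, smul_neg, add_zero, zero_add,
      neg_add_rev, neg_neg] at e02 e12 e03 e13 e23
    have key : ∀ {x y : L}, x = y → ∀ j, b.repr x j = b.repr y j := by
      rintro x y rfl j; rfl
    have q02 := fun j => key e02 j
    have q12 := fun j => key e12 j
    have q03 := fun j => key e03 j
    have q13 := fun j => key e13 j
    have q23 := fun j => key e23 j
    simp only [map_add, map_smul, map_neg, Finsupp.add_apply, Finsupp.smul_apply,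
      Finsupp.neg_apply, Module.Basis.repr_self, Finsupp.single_apply, smul_eq_mul] at q02 q12 q03 q13 q23
    have p1 := q02 2; have p2 := q02 3; have p3 := q02 0; have p4 := q02 1
    have p5 := q12 2; have p6 := q12 3
    have p7 := q03 0; have p8 := q03 1
    have p9 := q13 0; have p10 := q13 1
    have p11 := q23 0; have p12 := q23 1
    simp only [Finsupp.coe_zero, Pi.zero_apply, map_zero] at p11 p12
    simp only [Fin.reduceEq, reduceIte, mul_one, mul_zero, neg_zero, zero_add, add_zero, neg_add_rev, neg_neg] at p1 p2 p3 p4 p5 p6 p7 p8 p9 p10 p11 p12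
    refine ⟨a0, -a1, c0, c1, ?_, ?_, ?_, ?_⟩
    · rw [hD0, show a2 = 0 by linarith, show a3 = 0 by linarith]; module
    · rw [hD1, show B0 = -a1 by linarith, show B1 = a0 by linarith,
        show B2 = 0 by linarith, show B3 = 0 by linarith]; module
    · rw [hD2, show c2 = 0 by linarith, show c3 = 0 by linarith]; module
    · rw [hD3, show e0 = c1 by linarith, show e1 = -c0 by linarith,
        show e2 = 0 by linarith, show e3 = 0 by linarith]; module
  · rintro ⟨μ11, μ12, μ13, μ14, h1, h2, h3, h4⟩
    have key : LinearMap.mk₂ ℝ (fun x y => D ⁅x, y⁆ - ⁅D x, y⁆ - ⁅x, D y⁆)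
        (by intros; simp [add_lie, lie_add]; abel)
        (by intros; simp [smul_lie, lie_smul, smul_sub])
        (by intros; simp [add_lie, lie_add]; abel)
        (by intros; simp [smul_lie, lie_smul, smul_sub]) = 0 := by
      apply LinearMap.ext_basis b b
      intro i j
      fin_cases i <;> fin_cases j <;>
        simp only [Fin.zero_eta, Fin.mk_one, Fin.reduceFinMk, LinearMap.mk₂_apply, LinearMap.zero_apply, Fin.isValue,
          h12, h13, h14, h23, h24, h34, h21, h31, h41, h32, h42, h43, lie_self,
          h1, h2, h3, h4, map_zero, map_neg, map_add, map_sub, map_smul,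
          add_lie, lie_add, sub_lie, lie_sub, smul_lie, lie_smul, smul_zero,
          smul_neg, smul_sub, smul_add, neg_neg, lie_zero, zero_lie] <;>
        module
    intro x y
    have := DFunLike.congr_fun (DFunLike.congr_fun key x) y
    simp only [LinearMap.mk₂_apply, LinearMap.zero_apply] at this
    rw [sub_sub, sub_eq_zero] at this
    exact this
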